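/- For h ∈ ℕ: (i) for every k ∈ ℕ the odd symplectic spinor s_{o,k}^h = Σ_{p=0}^{h} √((2k+2p)!!/(2k+2p+1)!!) binom(h,p) ψ_{2k+2p+1}(q) z̄^{h−p} z^p satisfies D_s s_{o,k}^h = 0; (ii) for every k ∈ ℕ the even symplectic spinor s_{e,k}^h = Σ_{p=0}^{h} √((2k+2p−1)!!/(2k+2p)!!) binom(h,p) ψ_{2k+2p}(q) z̄^{h−p} z^p satisfies D_s s_{e,k}^h = 0; (iii) for every integer k with −h ≤ k ≤ −1, the even symplectic spinor s_{e,k}^h = Σ_{p=|k|}^{h} √((2k+2p−1)!!/(2k+2p)!!) binom(h,p) ψ_{2k+2p}(q) z̄^{h−p} z^p satisfies D_s s_{e,k}^h = 0. -/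

import Mathlib

noncomputable section

open Complex Finset

/-- Points `(x, y, q)` of `ℝ³`. -/
abbrev P3 := ℝ × ℝ × ℝ

/-- Partial derivative with respect to `x`. -/
def pdx (f : P3 → ℂ) : P3 → ℂ := fun p => deriv (fun t => f (t, p.2.1, p.2.2)) p.1

/-- Partial derivative with respect to `y`. -/
def pdy (f : P3 → ℂ) : P3 → ℂ := fun p => deriv (fun t => f (p.1, t, p.2.2)) p.2.1

/-- Partial derivative with respect to `q`. -/
def pdq (f : P3 → ℂ) : P3 → ℂ := fun p => deriv (fun t => f (p.1, p.2.1, t)) p.2.2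

/-- The symplectic Dirac operator `D_s f = i q ∂_y f − ∂_x ∂_q f`. -/
def Ds (f : P3 → ℂ) : P3 → ℂ := fun p =>
  Complex.I * (p.2.2 : ℂ) * pdy f p - pdx (pdq f) p

/-- The operator `X_s f = y ∂_q f + i x q f`. -/
def Xs (f : P3 → ℂ) : P3 → ℂ := fun p =>
  (p.2.1 : ℂ) * pdq f p + Complex.I * (p.1 : ℂ) * (p.2.2 : ℂ) * f p

/-- The Euler operator `E f = x ∂_x f + y ∂_y f`. -/
def Eul (f : P3 → ℂ) : P3 → ℂ := fun p =>
  (p.1 : ℂ) * pdx f p + (p.2.1 : ℂ) * pdy f p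

/-- The complex coordinate `z = x + iy`. -/
def zc (r : P3) : ℂ := (r.1 : ℂ) + Complex.I * (r.2.1 : ℂ)

/-- The complex coordinate `z̄ = x − iy`. -/
def zbc (r : P3) : ℂ := (r.1 : ℂ) - Complex.I * (r.2.1 : ℂ)

/-- The Wirtinger derivative `∂_z = (∂_x − i ∂_y)/2`. -/
def pdz (f : P3 → ℂ) : P3 → ℂ := fun p => (pdx f p - Complex.I * pdy f p) / 2

/-- The Wirtinger derivative `∂_{z̄} = (∂_x + i ∂_y)/2`. -/
def pdzbar (f : P3 → ℂ) : P3 → ℂ := fun p => (pdx f p + Complex.I * pdy f p) / 2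

/-- The physicists' Hermite polynomial `H_k(q) = (−1)^k e^{q²} (d/dq)^k e^{−q²}`. -/
def hermiteP (k : ℕ) (q : ℝ) : ℝ :=
  (-1 : ℝ) ^ k * Real.exp (q ^ 2) * (deriv^[k] fun t : ℝ => Real.exp (-t ^ 2)) q

/-- The `k`-th Hermite function `ψ_k(q) = (2^k k! √π)^{−1/2} e^{−q²/2} H_k(q)`. -/
def psiH (k : ℕ) (q : ℝ) : ℝ :=
  (Real.sqrt (2 ^ k * (Nat.factorial k : ℝ) * Real.sqrt Real.pi))⁻¹ *
    Real.exp (-q ^ 2 / 2) * hermiteP k q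

/-- The double factorial `m!!` of an integer, with the convention `m!! = 1` for `m ≤ 0`
(in particular `(−1)!! = 1`). -/
def dfac (m : ℤ) : ℝ := if m ≤ 0 then 1 else (Nat.doubleFactorial m.toNat : ℝ)

/-- The even basis element
`s_{e,k}^h = Σ_p √((2k+2p−1)!!/(2k+2p)!!) binom(h,p) ψ_{2k+2p}(q) z̄^{h−p} z^p`, where
the sum runs over `max(0, −k) ≤ p ≤ h` (i.e. over `0 ≤ p ≤ h` if `k ≥ 0`, and over
`|k| ≤ p ≤ h` if `−h ≤ k ≤ −1`). -/
def sE (h : ℕ) (k : ℤ) : P3 → ℂ := fun r =>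
  ∑ p ∈ Finset.Icc (-k).toNat h,
    (Real.sqrt (dfac (2 * k + 2 * (p : ℤ) - 1) / dfac (2 * k + 2 * (p : ℤ))) : ℂ) *
      (h.choose p : ℂ) * (psiH (2 * k + 2 * (p : ℤ)).toNat r.2.2 : ℂ) *
        (zbc r) ^ (h - p) * (zc r) ^ p

/-- The odd basis element
`s_{o,k}^h = Σ_{p=0}^h √((2k+2p)!!/(2k+2p+1)!!) binom(h,p) ψ_{2k+2p+1}(q) z̄^{h−p} z^p`. -/
def sO (h k : ℕ) : P3 → ℂ := fun r =>
  ∑ p ∈ Finset.range (h + 1),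
    (Real.sqrt ((Nat.doubleFactorial (2 * k + 2 * p) : ℝ) /
        (Nat.doubleFactorial (2 * k + 2 * p + 1) : ℝ)) : ℂ) *
      (h.choose p : ℂ) * (psiH (2 * k + 2 * p + 1) r.2.2 : ℂ) *
        (zbc r) ^ (h - p) * (zc r) ^ p

def Hpol : ℕ → Polynomial ℝ
  | 0 => 1
  | (k+1) => 2 * (Polynomial.X * Hpol k) - Polynomial.derivative (Hpol k)

lemma gauss_hasDerivAt (q : ℝ) :
    HasDerivAt (fun t : ℝ => Real.exp (-t^2)) (-(2*q) * Real.exp (-q^2)) q := by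
  have h1 : HasDerivAt (fun t : ℝ => -t^2) (-(2*q)) q := by
    simpa using (hasDerivAt_pow 2 q).fun_neg
  simpa [mul_comm, Function.comp_def] using (Real.hasDerivAt_exp (-q^2)).comp q h1

lemma iter_gauss (k : ℕ) : (deriv^[k] fun t : ℝ => Real.exp (-t^2)) =
    fun q => (-1:ℝ)^k * Polynomial.eval q (Hpol k) * Real.exp (-q^2) := by
  induction k with
  | zero => funext q; simp [Hpol]
  | succ k ih =>
    funext q
    rw [Function.iterate_succ_apply', ih]
    have h1 : HasDerivAt (fun q : ℝ => (-1:ℝ)^k * Polynomial.eval q (Hpol k) * Real.exp (-q^2))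
        (((-1:ℝ)^k * Polynomial.eval q (Polynomial.derivative (Hpol k))) * Real.exp (-q^2)
          + ((-1:ℝ)^k * Polynomial.eval q (Hpol k)) * (-(2*q) * Real.exp (-q^2))) q :=
      (((Hpol k).hasDerivAt q).const_mul ((-1:ℝ)^k)).mul (gauss_hasDerivAt q)
    rw [h1.deriv]
    show _ = (-1:ℝ)^(k+1) * Polynomial.eval q (2 * (Polynomial.X * Hpol k)
        - Polynomial.derivative (Hpol k)) * Real.exp (-q^2)
    simp only [Polynomial.eval_sub, Polynomial.eval_mul, Polynomial.eval_X,
      Polynomial.eval_ofNat, pow_succ]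
    ring

lemma hermiteP_eq (k : ℕ) (q : ℝ) : hermiteP k q = Polynomial.eval q (Hpol k) := by
  unfold hermiteP
  rw [iter_gauss]
  have h1 : Real.exp (q^2) * Real.exp (-q^2) = 1 := by rw [← Real.exp_add]; simp
  have h2 : (-1:ℝ)^k * (-1)^k = 1 := by
    rw [← pow_add]; exact Even.neg_one_pow ⟨k, rfl⟩
  calc (-1:ℝ)^k * Real.exp (q^2) * ((-1:ℝ)^k * Polynomial.eval q (Hpol k) * Real.exp (-q^2))
      = ((-1:ℝ)^k * (-1)^k) * (Real.exp (q^2) * Real.exp (-q^2)) * Polynomial.eval q (Hpol k) := by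
        ring
    _ = Polynomial.eval q (Hpol k) := by rw [h1, h2]; ring

lemma Hpol_deriv : ∀ k : ℕ, Polynomial.derivative (Hpol (k+1)) = (2*(k:Polynomial ℝ)+2) * Hpol k := by
  have key : ∀ k : ℕ,
      Polynomial.derivative (Hpol (k+1)) = (2*(k:Polynomial ℝ)+2) * Hpol k ∧
      Polynomial.derivative (Hpol (k+2)) = (2*((k:Polynomial ℝ)+1)+2) * Hpol (k+1) := by
    intro k
    induction k with
    | zero =>
      constructor
      · show Polynomial.derivative (2 * (Polynomial.X * Hpol 0) - Polynomial.derivative (Hpol 0)) = _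
        simp [Hpol]
      · show Polynomial.derivative (2 * (Polynomial.X * Hpol 1) - Polynomial.derivative (Hpol 1)) = _
        have h1 : Hpol 1 = 2 * (Polynomial.X * 1) - Polynomial.derivative 1 := rfl
        simp only [h1]
        simp [Hpol]
        ring
    | succ k ih =>
      refine ⟨by push_cast [ih.2]; ring_nf, ?_⟩
      have e1 := ih.1
      have e2 := ih.2
      show Polynomial.derivative (2 * (Polynomial.X * Hpol (k+2)) - Polynomial.derivative (Hpol (k+2))) = _
      have h2 : Hpol (k+2) = 2 * (Polynomial.X * Hpol (k+1)) - Polynomial.derivative (Hpol (k+1)) := rfl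
      simp only [Polynomial.derivative_sub, Polynomial.derivative_mul, Polynomial.derivative_add,
        Polynomial.derivative_ofNat, Polynomial.derivative_natCast, Polynomial.derivative_one,
        Polynomial.derivative_X, e1, e2]
      rw [h2, e1]
      push_cast
      ring
  exact fun k => (key k).1

def Nn (k : ℕ) : ℝ := (Real.sqrt (2 ^ k * (Nat.factorial k : ℝ) * Real.sqrt Real.pi))⁻¹

def dpsi (k : ℕ) (q : ℝ) : ℝ :=
  Nn k * Real.exp (-q^2/2) *
    (Polynomial.eval q (Polynomial.derivative (Hpol k)) - q * Polynomial.eval q (Hpol k))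

lemma psiH_eq (k : ℕ) (q : ℝ) :
    psiH k q = Nn k * Real.exp (-q^2/2) * Polynomial.eval q (Hpol k) := by
  unfold psiH Nn; rw [hermiteP_eq]

lemma psiH_hasDerivAt (k : ℕ) (q : ℝ) : HasDerivAt (psiH k) (dpsi k q) q := by
  have hfun : psiH k = fun t => Nn k * Real.exp (-t^2/2) * Polynomial.eval t (Hpol k) :=
    funext fun t => psiH_eq k t
  rw [hfun]
  have hg : HasDerivAt (fun t : ℝ => Real.exp (-t^2/2)) (Real.exp (-q^2/2) * (-q)) q := by
    have h1 : HasDerivAt (fun t : ℝ => -t^2/2) (-q) q := by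
      have h := ((hasDerivAt_pow 2 q).neg).div_const 2
      refine h.congr_deriv ?_
      push_cast
      ring
    simpa [Function.comp_def] using (Real.hasDerivAt_exp (-q^2/2)).comp q h1
  have := ((hg.const_mul (Nn k)).mul ((Hpol k).hasDerivAt q))
  refine this.congr_deriv ?_
  unfold dpsi
  ring

lemma Nn_succ (k : ℕ) : Nn k = Real.sqrt (2*(k:ℝ)+2) * Nn (k+1) := by
  unfold Nn
  have h1 : (2:ℝ)^(k+1) * (Nat.factorial (k+1) : ℝ) * Real.sqrt Real.pi
      = (2*(k:ℝ)+2) * (2^k * (Nat.factorial k : ℝ) * Real.sqrt Real.pi) := by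
    push_cast [Nat.factorial_succ]; ring
  rw [h1, Real.sqrt_mul (show (0:ℝ) ≤ 2*(k:ℝ)+2 by positivity)
    (2^k * (Nat.factorial k : ℝ) * Real.sqrt Real.pi), mul_inv, ← mul_assoc,
    mul_inv_cancel₀ (by positivity), one_mul]

lemma raise' (k : ℕ) (q : ℝ) :
    q * psiH k q - dpsi k q = Real.sqrt (2*(k:ℝ)+2) * psiH (k+1) q := by
  unfold dpsi
  rw [psiH_eq, psiH_eq, Nn_succ k]
  show _ = _ * (Nn (k+1) * _ * Polynomial.eval q (2 * (Polynomial.X * Hpol k) - Polynomial.derivative (Hpol k)))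
  simp only [Polynomial.eval_sub, Polynomial.eval_mul, Polynomial.eval_X, Polynomial.eval_ofNat]
  ring

lemma lower (k : ℕ) (q : ℝ) :
    q * psiH (k+1) q + dpsi (k+1) q = Real.sqrt (2*(k:ℝ)+2) * psiH k q := by
  unfold dpsi
  rw [psiH_eq, psiH_eq, Nn_succ k, Hpol_deriv k]
  have h2 : Real.sqrt (2*(k:ℝ)+2) ^ 2 = 2*(k:ℝ)+2 :=
    Real.sq_sqrt (by positivity)
  simp only [Polynomial.eval_mul, Polynomial.eval_add, Polynomial.eval_ofNat,
    Polynomial.eval_natCast]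
  linear_combination (-(Nn (k+1)) * Real.exp (-q^2/2) * Polynomial.eval q (Hpol k)) * h2

lemma lower' (m : ℕ) (q : ℝ) :
    q * psiH m q + dpsi m q = Real.sqrt (2*(m:ℝ)) * psiH (m-1) q := by
  cases m with
  | zero =>
    simp only [Nat.cast_zero, mul_zero, Real.sqrt_zero, zero_mul]
    unfold dpsi
    rw [psiH_eq]
    show q * _ + Nn 0 * _ * (Polynomial.eval q (Polynomial.derivative (1:Polynomial ℝ)) - _) = 0
    simp
    ring
  | succ k =>
    have := lower k q
    convert this using 3
    push_cast; ring
    omega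

lemma dfac_pos (m : ℤ) : 0 < dfac m := by
  unfold dfac
  split
  · norm_num
  · exact_mod_cast Nat.doubleFactorial_pos _

lemma dfac_natCast (m : ℕ) : dfac (m : ℤ) = (Nat.doubleFactorial m : ℝ) := by
  unfold dfac
  split
  · have : m = 0 := by omega
    subst this; simp [Nat.doubleFactorial]
  · simp

lemma dfac_add_two {m : ℤ} (hm : -1 ≤ m) : dfac (m + 2) = ((m:ℝ) + 2) * dfac m := by
  rcases eq_or_lt_of_le hm with h | h
  · rw [← h]
    norm_num [dfac]
  · have h0 : 0 ≤ m := by omega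
    lift m to ℕ using h0
    rw [show (m:ℤ) + 2 = ((m+2 : ℕ) : ℤ) by push_cast; ring, dfac_natCast, dfac_natCast,
      Nat.doubleFactorial_add_two]
    push_cast; ring

def cCoef (h μ p₀ : ℕ) (j : ℕ) : ℝ :=
  Real.sqrt (dfac ((μ:ℤ) + 2*(j:ℤ) - 1) / dfac ((μ:ℤ) + 2*(j:ℤ))) * (h.choose (p₀+j))

lemma sqrt_mul_nonneg' (X : ℝ) (hX : 0 ≤ X) (n : ℝ) (hn : 0 ≤ n) :
    Real.sqrt X * n = Real.sqrt (X * n^2) := by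
  rw [Real.sqrt_mul hX, Real.sqrt_sq hn]

lemma sqrt_form (A S c n : ℝ) (hA : 0 ≤ A) (hS : 0 ≤ S) (hc : 0 ≤ c) (hn : 0 ≤ n) :
    Real.sqrt A * c * n * Real.sqrt S = Real.sqrt (A * S * (c*n)^2) := by
  have h1 : Real.sqrt A * c * n * Real.sqrt S = Real.sqrt A * Real.sqrt S * (c * n) := by ring
  rw [h1, ← Real.sqrt_mul hA, sqrt_mul_nonneg' _ (mul_nonneg hA hS) _ (mul_nonneg hc hn)]

lemma key (h p₀ μ i : ℕ) (hi : p₀ + i + 1 ≤ h) :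
    cCoef h μ p₀ (i+1) * ((p₀+i+1 : ℕ) : ℝ) * Real.sqrt (2*(μ:ℝ) + 4*(i:ℝ) + 4)
    = cCoef h μ p₀ i * ((h - p₀ - i : ℕ) : ℝ) * Real.sqrt (2*(μ:ℝ) + 4*(i:ℝ) + 2) := by
  unfold cCoef
  have e1 : (μ:ℤ) + 2*((i+1:ℕ):ℤ) - 1 = ((μ:ℤ) + 2*(i:ℤ) - 1) + 2 := by push_cast; ring
  have e2 : (μ:ℤ) + 2*((i+1:ℕ):ℤ) = ((μ:ℤ) + 2*(i:ℤ)) + 2 := by push_cast; ring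
  rw [e1, e2, dfac_add_two (by omega : (-1:ℤ) ≤ (μ:ℤ) + 2*(i:ℤ) - 1),
    dfac_add_two (by omega : (-1:ℤ) ≤ (μ:ℤ) + 2*(i:ℤ))]
  have hd1 := dfac_pos ((μ:ℤ) + 2*(i:ℤ) - 1)
  have hd2 := dfac_pos ((μ:ℤ) + 2*(i:ℤ))
  have c1 : ((((μ:ℤ) + 2*(i:ℤ) - 1 : ℤ)):ℝ) + 2 = (μ:ℝ) + 2*(i:ℝ) + 1 := by push_cast; ring
  have c2 : ((((μ:ℤ) + 2*(i:ℤ) : ℤ)):ℝ) + 2 = (μ:ℝ) + 2*(i:ℝ) + 2 := by push_cast; ring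
  rw [c1, c2]
  rw [sqrt_form _ _ _ _ (le_of_lt (div_pos (mul_pos (by positivity) hd1)
      (mul_pos (by positivity) hd2))) (by positivity) (by positivity) (by positivity)]
  rw [sqrt_form _ _ _ _ (le_of_lt (div_pos hd1 hd2)) (by positivity) (by positivity) (by positivity)]
  congr 1
  have hnat : (h.choose (p₀+i+1) : ℝ) * ((p₀+i+1 : ℕ) : ℝ)
      = (h.choose (p₀+i) : ℝ) * ((h - p₀ - i : ℕ) : ℝ) := by
    have h2 := Nat.choose_succ_right_eq h (p₀+i)
    have h3 : h - p₀ - i = h - (p₀ + i) := Nat.sub_sub h p₀ i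
    rw [h3]
    exact_mod_cast h2
  have hsq : ((h.choose (p₀+i+1) : ℝ) * ((p₀+i+1 : ℕ) : ℝ))^2
      = ((h.choose (p₀+i) : ℝ) * ((h - p₀ - i : ℕ) : ℝ))^2 := by rw [hnat]
  push_cast at hsq ⊢
  rw [← add_assoc, hsq]
  field_simp
  ring

lemma hasDerivAt_ofReal' (x : ℝ) : HasDerivAt (fun t : ℝ => (t:ℂ)) 1 x := by
  simpa using (hasDerivAt_id x).ofReal_comp


lemma cpow_deriv {f : ℝ → ℂ} {f' : ℂ} {x : ℝ} (n : ℕ) (hf : HasDerivAt f f' x) :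
    HasDerivAt (fun t => f t ^ n) ((n:ℂ) * f x ^ (n-1) * f') x := by
  simpa [Function.comp_def] using (hasDerivAt_pow n (f x)).comp x hf

lemma hderiv_x (A : ℂ) (a b : ℕ) (x y : ℝ) :
    HasDerivAt (fun t : ℝ => A * ((t:ℂ) - Complex.I * (y:ℝ))^a * ((t:ℂ) + Complex.I * (y:ℝ))^b)
      (A * ((a:ℂ) * ((x:ℂ) - Complex.I*(y:ℝ))^(a-1) * ((x:ℂ)+Complex.I*(y:ℝ))^b
          + (b:ℂ) * ((x:ℂ) - Complex.I*(y:ℝ))^a * ((x:ℂ)+Complex.I*(y:ℝ))^(b-1))) x := by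
  have hu : HasDerivAt (fun t : ℝ => (t:ℂ) - Complex.I*(y:ℝ)) 1 x :=
    (hasDerivAt_ofReal' x).sub_const _
  have hv : HasDerivAt (fun t : ℝ => (t:ℂ) + Complex.I*(y:ℝ)) 1 x :=
    (hasDerivAt_ofReal' x).add_const _
  have h := (((cpow_deriv a hu).const_mul A)).mul (cpow_deriv b hv)
  refine h.congr_deriv ?_
  ring

lemma hderiv_y (A : ℂ) (a b : ℕ) (x y : ℝ) :
    HasDerivAt (fun t : ℝ => A * ((x:ℝ) - Complex.I * (t:ℂ))^a * ((x:ℝ) + Complex.I * (t:ℂ))^b)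
      (A * ((a:ℂ) * ((x:ℝ) - Complex.I*(y:ℝ))^(a-1) * ((x:ℝ)+Complex.I*(y:ℝ))^b * (-Complex.I)
          + (b:ℂ) * ((x:ℝ) - Complex.I*(y:ℝ))^a * ((x:ℝ)+Complex.I*(y:ℝ))^(b-1) * Complex.I)) y := by
  have hu : HasDerivAt (fun t : ℝ => (x:ℝ) - Complex.I*(t:ℂ)) (-Complex.I) y := by
    simpa using ((hasDerivAt_ofReal' y).const_mul Complex.I).const_sub ((x:ℝ):ℂ)
  have hv : HasDerivAt (fun t : ℝ => (x:ℝ) + Complex.I*(t:ℂ)) Complex.I y := by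
    simpa using ((hasDerivAt_ofReal' y).const_mul Complex.I).const_add ((x:ℝ):ℂ)
  have h := (((cpow_deriv a hu).const_mul A)).mul (cpow_deriv b hv)
  refine h.congr_deriv ?_
  ring

lemma raise2 (mu j : ℕ) (q : ℝ) :
    q * psiH (mu+2*j) q - dpsi (mu+2*j) q
      = Real.sqrt (2*(mu:ℝ)+4*(j:ℝ)+2) * psiH (mu+2*j+1) q := by
  have h1 : (2*((mu+2*j:ℕ):ℝ)+2) = 2*(mu:ℝ)+4*(j:ℝ)+2 := by push_cast; ring
  rw [raise' (mu+2*j) q, h1]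

lemma lower2 (mu j : ℕ) (q : ℝ) :
    q * psiH (mu+2*j) q + dpsi (mu+2*j) q
      = Real.sqrt (2*(mu:ℝ)+4*(j:ℝ)) * psiH (mu+2*j-1) q := by
  have h1 : (2*((mu+2*j:ℕ):ℝ)) = 2*(mu:ℝ)+4*(j:ℝ) := by push_cast; ring
  rw [lower' (mu+2*j) q, h1]

lemma master (h p₀ μ : ℕ) (c : ℕ → ℝ) (h0 : p₀ = 0 ∨ μ = 0)
    (H : ∀ i : ℕ, i < h - p₀ →
      c (i+1) * ((p₀+i+1 : ℕ) : ℝ) * Real.sqrt (2*(μ:ℝ) + 4*(i:ℝ) + 4)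
      = c i * ((h - p₀ - i : ℕ) : ℝ) * Real.sqrt (2*(μ:ℝ) + 4*(i:ℝ) + 2))
    (r : P3) :
    Ds (fun s => ∑ j ∈ Finset.range (h - p₀ + 1),
      (c j : ℂ) * (psiH (μ + 2*j) s.2.2 : ℂ) * zbc s ^ (h - p₀ - j) * zc s ^ (p₀ + j)) r = 0 := by
  obtain ⟨x, y, q⟩ := r
  set n := h - p₀ with hn
  set S : P3 → ℂ := fun s => ∑ j ∈ Finset.range (n + 1),
      (c j : ℂ) * (psiH (μ + 2*j) s.2.2 : ℂ) * zbc s ^ (n - j) * zc s ^ (p₀ + j) with hS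
  have hpdq : pdq S = fun s : P3 => ∑ j ∈ Finset.range (n+1),
      (c j : ℂ) * (dpsi (μ+2*j) s.2.2 : ℂ) * zbc s ^ (n-j) * zc s ^ (p₀+j) := by
    funext s
    exact HasDerivAt.deriv (HasDerivAt.fun_sum fun j hj =>
      ((((psiH_hasDerivAt (μ+2*j) s.2.2).ofReal_comp).const_mul ((c j : ℂ))).mul_const
        (zbc s ^ (n-j))).mul_const (zc s ^ (p₀+j)))
  have hxq : pdx (pdq S) (x, y, q) = ∑ j ∈ Finset.range (n+1),
      ((c j : ℂ) * (dpsi (μ+2*j) q : ℂ)) *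
        (((n-j : ℕ) : ℂ) * ((x:ℂ) - Complex.I*(y:ℝ))^(n-j-1) * ((x:ℂ)+Complex.I*(y:ℝ))^(p₀+j)
          + ((p₀+j : ℕ) : ℂ) * ((x:ℂ) - Complex.I*(y:ℝ))^(n-j) * ((x:ℂ)+Complex.I*(y:ℝ))^(p₀+j-1)) := by
    rw [hpdq]
    exact HasDerivAt.deriv (HasDerivAt.fun_sum fun j hj =>
      hderiv_x ((c j : ℂ) * (dpsi (μ+2*j) q : ℂ)) (n-j) (p₀+j) x y)
  have hy : pdy S (x, y, q) = ∑ j ∈ Finset.range (n+1),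
      ((c j : ℂ) * (psiH (μ+2*j) q : ℂ)) *
        (((n-j : ℕ) : ℂ) * ((x:ℝ) - Complex.I*(y:ℝ))^(n-j-1) * ((x:ℝ)+Complex.I*(y:ℝ))^(p₀+j) * (-Complex.I)
          + ((p₀+j : ℕ) : ℂ) * ((x:ℝ) - Complex.I*(y:ℝ))^(n-j) * ((x:ℝ)+Complex.I*(y:ℝ))^(p₀+j-1) * Complex.I) := by
    exact HasDerivAt.deriv (HasDerivAt.fun_sum fun j hj =>
      hderiv_y ((c j : ℂ) * (psiH (μ+2*j) q : ℂ)) (n-j) (p₀+j) x y)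
  set G : ℕ → ℂ := fun i => if i = 0 then 0 else
    ((((n - (i-1) : ℕ) : ℝ) * (c (i-1) * (Real.sqrt (2*(μ:ℝ)+4*((i-1 : ℕ):ℝ)+2) * psiH (μ+2*(i-1)+1) q)) : ℝ) : ℂ)
      * (((x:ℂ) - Complex.I*(y:ℂ))^(n-(i-1)-1) * ((x:ℂ) + Complex.I*(y:ℂ))^(p₀+(i-1))) with hG
  calc Ds S (x, y, q)
      = Complex.I * (q:ℂ) * pdy S (x, y, q) - pdx (pdq S) (x, y, q) := rfl
    _ = ∑ j ∈ Finset.range (n+1), (Complex.I * (q:ℂ) *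
          (((c j : ℂ) * (psiH (μ+2*j) q : ℂ)) *
            (((n-j : ℕ) : ℂ) * ((x:ℝ) - Complex.I*(y:ℝ))^(n-j-1) * ((x:ℝ)+Complex.I*(y:ℝ))^(p₀+j) * (-Complex.I)
              + ((p₀+j : ℕ) : ℂ) * ((x:ℝ) - Complex.I*(y:ℝ))^(n-j) * ((x:ℝ)+Complex.I*(y:ℝ))^(p₀+j-1) * Complex.I))
          - ((c j : ℂ) * (dpsi (μ+2*j) q : ℂ)) *
            (((n-j : ℕ) : ℂ) * ((x:ℂ) - Complex.I*(y:ℝ))^(n-j-1) * ((x:ℂ)+Complex.I*(y:ℝ))^(p₀+j)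
              + ((p₀+j : ℕ) : ℂ) * ((x:ℂ) - Complex.I*(y:ℝ))^(n-j) * ((x:ℂ)+Complex.I*(y:ℝ))^(p₀+j-1))) := by
        rw [hy, hxq, Finset.mul_sum, ← Finset.sum_sub_distrib]
    _ = ∑ j ∈ Finset.range (n+1), (G (j+1) - G j) := by
        refine Finset.sum_congr rfl fun j hj => ?_
        rw [Finset.mem_range, Nat.lt_succ_iff] at hj
        have e1 : Complex.I * (q:ℂ) *
          (((c j : ℂ) * (psiH (μ+2*j) q : ℂ)) *
            (((n-j : ℕ) : ℂ) * ((x:ℝ) - Complex.I*(y:ℝ))^(n-j-1) * ((x:ℝ)+Complex.I*(y:ℝ))^(p₀+j) * (-Complex.I)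
              + ((p₀+j : ℕ) : ℂ) * ((x:ℝ) - Complex.I*(y:ℝ))^(n-j) * ((x:ℝ)+Complex.I*(y:ℝ))^(p₀+j-1) * Complex.I))
          - ((c j : ℂ) * (dpsi (μ+2*j) q : ℂ)) *
            (((n-j : ℕ) : ℂ) * ((x:ℂ) - Complex.I*(y:ℝ))^(n-j-1) * ((x:ℂ)+Complex.I*(y:ℝ))^(p₀+j)
              + ((p₀+j : ℕ) : ℂ) * ((x:ℂ) - Complex.I*(y:ℝ))^(n-j) * ((x:ℂ)+Complex.I*(y:ℝ))^(p₀+j-1))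
          = ((((n-j : ℕ) : ℝ) * (c j * (q * psiH (μ+2*j) q - dpsi (μ+2*j) q)) : ℝ) : ℂ)
              * (((x:ℂ) - Complex.I*(y:ℂ))^(n-j-1) * ((x:ℂ) + Complex.I*(y:ℂ))^(p₀+j))
            - ((((p₀+j : ℕ) : ℝ) * (c j * (q * psiH (μ+2*j) q + dpsi (μ+2*j) q)) : ℝ) : ℂ)
              * (((x:ℂ) - Complex.I*(y:ℂ))^(n-j) * ((x:ℂ) + Complex.I*(y:ℂ))^(p₀+j-1)) := by
          push_cast
          linear_combination ((q:ℂ) * (c j : ℂ) * ((psiH (μ+2*j) q : ℝ) : ℂ) *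
            (((p₀:ℂ)+(j:ℂ)) * ((x:ℂ) - Complex.I*(y:ℂ))^(n-j) * ((x:ℂ)+Complex.I*(y:ℂ))^(p₀+j-1)
              - ((n-j : ℕ) : ℂ) * ((x:ℂ) - Complex.I*(y:ℂ))^(n-j-1) * ((x:ℂ)+Complex.I*(y:ℂ))^(p₀+j))) * Complex.I_mul_I
        have hG1 : G (j+1) = ((((n - j : ℕ) : ℝ) * (c j * (Real.sqrt (2*(μ:ℝ)+4*(j:ℝ)+2) * psiH (μ+2*j+1) q)) : ℝ) : ℂ)
            * (((x:ℂ) - Complex.I*(y:ℂ))^(n-j-1) * ((x:ℂ) + Complex.I*(y:ℂ))^(p₀+j)) := by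
          rw [hG]
          simp only [Nat.succ_ne_zero, if_false, Nat.add_sub_cancel]
        have hG2 : ((((p₀+j : ℕ) : ℝ) * (c j * (Real.sqrt (2*(μ:ℝ)+4*(j:ℝ)) * psiH (μ+2*j-1) q)) : ℝ) : ℂ)
            * (((x:ℂ) - Complex.I*(y:ℂ))^(n-j) * ((x:ℂ) + Complex.I*(y:ℂ))^(p₀+j-1)) = G j := by
          rcases j with _ | i
          · rw [hG]
            simp only [if_pos rfl]
            rcases h0 with h0 | h0
            · subst h0; norm_num
            · subst h0; norm_num
          · rw [hG]
            simp only [Nat.succ_ne_zero, if_false, Nat.add_sub_cancel]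
            have ha : n - (i+1) = n - i - 1 := by omega
            have hb : p₀ + (i+1) - 1 = p₀ + i := by omega
            have hc' : μ + 2*(i+1) - 1 = μ + 2*i + 1 := by omega
            have hd : ((i+1 : ℕ) : ℝ) = (i:ℝ) + 1 := by push_cast; ring
            have he : 2*(μ:ℝ)+4*((i:ℝ)+1) = 2*(μ:ℝ)+4*(i:ℝ)+4 := by ring
            rw [ha, hb, hc', hd, he]
            have hi' : i < n := by omega
            have hH := H i hi'
            congr 1
            have hreal : ((p₀+(i+1) : ℕ) : ℝ) * (c (i+1) * (Real.sqrt (2*(μ:ℝ)+4*(i:ℝ)+4) * psiH (μ+2*i+1) q))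
                = ((n - i : ℕ) : ℝ) * (c i * (Real.sqrt (2*(μ:ℝ)+4*(i:ℝ)+2) * psiH (μ+2*i+1) q)) := by
              push_cast at hH ⊢
              linear_combination (psiH (μ+2*i+1) q) * hH
            exact_mod_cast congrArg Complex.ofReal hreal
        rw [e1, raise2 μ j q, lower2 μ j q, hG1, hG2]
    _ = G (n+1) - G 0 := Finset.sum_range_sub G (n+1)
    _ = 0 := by
        rw [hG]
        simp [Nat.sub_self]

lemma part1 (h k : ℕ) (r : P3) : Ds (sO h k) r = 0 := by
  have hsO : sO h k = (fun s => ∑ j ∈ Finset.range (h - 0 + 1),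
      (cCoef h (2*k+1) 0 j : ℂ) * (psiH ((2*k+1) + 2*j) s.2.2 : ℂ)
        * zbc s ^ (h - 0 - j) * zc s ^ (0 + j)) := by
    funext s
    unfold sO
    refine Finset.sum_congr rfl fun j hj => ?_
    have h1 : ((2*k+1 : ℕ):ℤ) + 2*(j:ℤ) - 1 = ((2*k+2*j : ℕ) : ℤ) := by push_cast; ring
    have h2 : ((2*k+1 : ℕ):ℤ) + 2*(j:ℤ) = ((2*k+2*j+1 : ℕ) : ℤ) := by push_cast; ring
    unfold cCoef
    rw [h1, h2, dfac_natCast, dfac_natCast,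
      show (2*k+1) + 2*j = 2*k+2*j+1 from by omega, Nat.zero_add, Nat.sub_zero]
    push_cast
    ring
  rw [hsO]
  refine master h 0 (2*k+1) (cCoef h (2*k+1) 0) (Or.inl rfl) (fun i hi => ?_) r
  exact key h 0 (2*k+1) i (by omega)

lemma part2 (h k : ℕ) (r : P3) : Ds (sE h (k:ℤ)) r = 0 := by
  have hsE : sE h (k:ℤ) = (fun s => ∑ j ∈ Finset.range (h - 0 + 1),
      (cCoef h (2*k) 0 j : ℂ) * (psiH ((2*k) + 2*j) s.2.2 : ℂ)
        * zbc s ^ (h - 0 - j) * zc s ^ (0 + j)) := by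
    funext s
    unfold sE
    rw [show ((-(k:ℤ)).toNat) = 0 from by omega]
    rw [show Finset.Icc 0 h = Finset.range (h+1) from by ext a; simp [Nat.lt_succ_iff]]
    refine Finset.sum_congr (by rw [Nat.sub_zero]) fun j hj => ?_
    have h1 : 2*(k:ℤ) + 2*(j:ℤ) - 1 = ((2*k : ℕ):ℤ) + 2*(j:ℤ) - 1 := by push_cast; ring
    have h2 : 2*(k:ℤ) + 2*(j:ℤ) = ((2*k : ℕ):ℤ) + 2*(j:ℤ) := by push_cast; ring
    have h3 : (2*(k:ℤ)+2*(j:ℤ)).toNat = (2*k) + 2*j := by omega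
    unfold cCoef
    rw [h3, ← h1, ← h2, Nat.zero_add, Nat.sub_zero]
    push_cast
    ring
  rw [hsE]
  refine master h 0 (2*k) (cCoef h (2*k) 0) (Or.inl rfl) (fun i hi => ?_) r
  exact key h 0 (2*k) i (by omega)

lemma part3 (h : ℕ) (k : ℤ) (hk1 : -(h:ℤ) ≤ k) (hk2 : k ≤ -1) (r : P3) :
    Ds (sE h k) r = 0 := by
  set p₀ : ℕ := (-k).toNat with hp₀def
  have hp₀ : ((p₀ : ℕ):ℤ) = -k := Int.toNat_of_nonneg (by omega)
  have hp₀h : p₀ ≤ h := by omega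
  have hsE : sE h k = (fun s => ∑ j ∈ Finset.range (h - p₀ + 1),
      (cCoef h 0 p₀ j : ℂ) * (psiH (0 + 2*j) s.2.2 : ℂ)
        * zbc s ^ (h - p₀ - j) * zc s ^ (p₀ + j)) := by
    funext s
    unfold sE
    rw [← hp₀def]
    rw [← Finset.Ico_add_one_right_eq_Icc, Finset.sum_Ico_eq_sum_range,
      show h+1-p₀ = h-p₀+1 from by omega]
    refine Finset.sum_congr rfl fun j hj => ?_
    have h6 : 2*k+2*((p₀+j:ℕ):ℤ)-1 = ((0:ℕ):ℤ)+2*(j:ℤ)-1 := by push_cast; omega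
    have h7 : 2*k+2*((p₀+j:ℕ):ℤ) = ((0:ℕ):ℤ)+2*(j:ℤ) := by push_cast; omega
    have h8 : (2*k+2*((p₀+j:ℕ):ℤ)).toNat = 0+2*j := by
      have := hp₀
      omega
    have h9 : h - (p₀+j) = h - p₀ - j := by omega
    unfold cCoef
    rw [h8, h6, h7, h9]
    push_cast
    ring
  rw [hsE]
  refine master h p₀ 0 (cCoef h 0 p₀) (Or.inr rfl) (fun i hi => ?_) r
  exact key h p₀ 0 i (by omega)


/-- The odd spinors `s_{o,k}^h` (`k ∈ ℕ`) and the even spinors `s_{e,k}^h`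
(`k ∈ ℕ`, and `−h ≤ k ≤ −1`) lie in the kernel of the symplectic Dirac operator. -/
theorem basis_monogenic (h : ℕ) :
    (∀ k : ℕ, ∀ p, Ds (sO h k) p = 0) ∧
    (∀ k : ℕ, ∀ p, Ds (sE h (k : ℤ)) p = 0) ∧
    (∀ k : ℤ, -(h : ℤ) ≤ k → k ≤ -1 → ∀ p, Ds (sE h k) p = 0) := by
  exact ⟨fun k p => part1 h k p, fun k p => part2 h k p,
    fun k hk1 hk2 p => part3 h k hk1 hk2 p⟩
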